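/- Let g̃ = [[εc, d],[εa, εb]] with a, d ∈ O* and b, c ∈ O, and let h ∈ GL₂(K) be such that h·g̃ = g̃·h and v(det h) is even. Then h ∈ I¹. -/

import Mathlib

noncomputable section

/-- The valuation `v` on `K = k((ε))`, with `v 0 = ∞`. -/
def lv {k : Type*} [Field k] (x : LaurentSeries k) : WithTop ℤ := x.orderTop

/-- The uniformizer `ε` of `k((ε))`. -/
def eps (k : Type*) [Field k] : LaurentSeries k := HahnSeries.single (1 : ℤ) 1

/-- The set `I¹` of matrices `[[a,b],[c,d]]` with `v a = v d = m`, `v b ≥ m`, `v c > m`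
for some `m ∈ ℤ`. -/
def I1 (k : Type*) [Field k] : Set (Matrix (Fin 2) (Fin 2) (LaurentSeries k)) :=
  {g | ∃ m : ℤ, lv (g 0 0) = (m : WithTop ℤ) ∧ lv (g 1 1) = (m : WithTop ℤ) ∧
    (m : WithTop ℤ) ≤ lv (g 0 1) ∧ (m : WithTop ℤ) < lv (g 1 0)}

lemma lv_mul {k : Type*} [Field k] (x y : LaurentSeries k) :
    lv (x * y) = lv x + lv y := by
  by_cases hx : x = 0
  · simp [hx, lv]
  by_cases hy : y = 0
  · simp [hy, lv]
  have hxy : x * y ≠ 0 := mul_ne_zero hx hy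
  unfold lv
  rw [← HahnSeries.order_eq_orderTop_of_ne_zero hx, ← HahnSeries.order_eq_orderTop_of_ne_zero hy,
    ← HahnSeries.order_eq_orderTop_of_ne_zero hxy, HahnSeries.order_mul hx hy]
  exact WithTop.coe_add _ _

lemma lv_eps (k : Type*) [Field k] : lv (eps k) = 1 :=
  HahnSeries.orderTop_single one_ne_zero

lemma lv_ne_top_iff {k : Type*} [Field k] {x : LaurentSeries k} : lv x ≠ ⊤ ↔ x ≠ 0 :=
  HahnSeries.orderTop_ne_top

lemma lv_add_left {k : Type*} [Field k] {x y : LaurentSeries k} (h : lv x < lv y) :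
    lv (x + y) = lv x := HahnSeries.orderTop_add_eq_left h

lemma lv_add_ge {k : Type*} [Field k] {x y : LaurentSeries k} {n : WithTop ℤ}
    (hx : n ≤ lv x) (hy : n ≤ lv y) : n ≤ lv (x + y) :=
  le_trans (le_min hx hy) HahnSeries.min_orderTop_le_orderTop_add

lemma coe_add_one_le {t : WithTop ℤ} {n : ℤ} (h : (n : WithTop ℤ) < t) :
    ((n + 1 : ℤ) : WithTop ℤ) ≤ t := by
  cases t with
  | top => exact le_top
  | coe m =>
    have : n < m := by exact_mod_cast h
    exact_mod_cast this

theorem statement2 (k : Type*) [Field k] [IsAlgClosed k]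
    (a b c d : LaurentSeries k)
    (ha : lv a = 0) (hd : lv d = 0) (hb : 0 ≤ lv b) (hc : 0 ≤ lv c)
    (h : GL (Fin 2) (LaurentSeries k))
    (hcomm : h.val * !![eps k * c, d; eps k * a, eps k * b]
      = !![eps k * c, d; eps k * a, eps k * b] * h.val)
    (heven : ∃ m : ℤ, lv h.val.det = ((2 * m : ℤ) : WithTop ℤ)) :
    h.val ∈ I1 k := by
  set ε := eps k with hεdef
  have hlvε : lv ε = 1 := lv_eps k
  have hεne : ε ≠ 0 := lv_ne_top_iff.mp (by rw [hlvε]; exact (WithTop.coe_ne_top (a := (1:ℤ))))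
  have hane : a ≠ 0 := lv_ne_top_iff.mp (by rw [ha]; exact (WithTop.coe_ne_top (a := (0:ℤ))))
  have hdne : d ≠ 0 := lv_ne_top_iff.mp (by rw [hd]; exact (WithTop.coe_ne_top (a := (0:ℤ))))
  have hεane : ε * a ≠ 0 := mul_ne_zero hεne hane
  set A := h.val 0 0 with hA0
  set B := h.val 0 1 with hB0
  set C := h.val 1 0 with hC0
  set D := h.val 1 1 with hD0
  -- entrywise commutation relations
  have e00 : (h.val * !![ε * c, d; ε * a, ε * b]) 0 0
      = (!![ε * c, d; ε * a, ε * b] * h.val) 0 0 := by rw [hcomm]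
  have e10 : (h.val * !![ε * c, d; ε * a, ε * b]) 1 0
      = (!![ε * c, d; ε * a, ε * b] * h.val) 1 0 := by rw [hcomm]
  simp only [Matrix.mul_apply, Fin.sum_univ_two, ← hA0, ← hB0, ← hC0, ← hD0] at e00 e10
  norm_num [Matrix.cons_val_zero, Matrix.cons_val_one, Matrix.head_cons] at e00 e10
  -- e00 : A * (ε*c) + B * (ε*a) = ε*c * A + d * C
  -- e10 : C * (ε*c) + D * (ε*a) = ε*a * A + ε*b * C
  set y : LaurentSeries k := C / (ε * a) with hydef
  set x : LaurentSeries k := A - y * (ε * c) with hxdef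
  have hC : C = y * (ε * a) := by
    rw [hydef]; field_simp
  have hA : A = x + y * (ε * c) := by rw [hxdef]; ring
  have hB : B = y * d := by
    have key : B * (ε * a) = y * d * (ε * a) := by linear_combination e00 + d * hC
    exact mul_right_cancel₀ hεane key
  have hD : D = x + y * (ε * b) := by
    have key : D * (ε * a) = (x + y * (ε * b)) * (ε * a) := by
      linear_combination e10 + (ε * a) * hA + (ε * b - ε * c) * hC
    exact mul_right_cancel₀ hεane key
  have hdetne : h.val.det ≠ 0 := by
    have h1 : h.val * (h⁻¹).val = 1 := h.mul_inv
    have h2 := congrArg Matrix.det h1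
    rw [Matrix.det_mul, Matrix.det_one] at h2
    exact left_ne_zero_of_mul_eq_one h2
  have hdet : h.val.det = A * D - B * C := Matrix.det_fin_two h.val
  rcases le_or_gt (lv x) (lv y) with hle | hlt
  · -- good case: h ∈ I¹ with m = v(x)
    have hxne : x ≠ 0 := by
      intro hx0
      have hxt : lv x = ⊤ := by rw [hx0]; simp [lv]
      have hyt : lv y = ⊤ := top_le_iff.mp (hxt ▸ hle)
      have hy0 : y = 0 := by
        by_contra hy
        exact lv_ne_top_iff.mpr hy hyt
      exact hdetne (by rw [hdet, hA, hB, hC, hD, hx0, hy0]; ring)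
    obtain ⟨m, hm⟩ : ∃ m : ℤ, lv x = (m : WithTop ℤ) := by
      rcases WithTop.ne_top_iff_exists.mp (lv_ne_top_iff.mpr hxne) with ⟨m, hm⟩
      exact ⟨m, hm.symm⟩
    have hstep : ∀ u : LaurentSeries k, (0 : WithTop ℤ) ≤ lv u →
        (m : WithTop ℤ) < lv (y * (ε * u)) := by
      intro u hu
      have h1 : lv (y * (ε * u)) = lv y + (1 + lv u) := by rw [lv_mul, lv_mul, hlvε]
      rw [h1]
      calc (m : WithTop ℤ) < ((m + 1 : ℤ) : WithTop ℤ) := by exact_mod_cast lt_add_one m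
        _ = (m : WithTop ℤ) + (1 + 0) := by
              simp only [← WithTop.coe_one, ← WithTop.coe_zero, ← WithTop.coe_add,
                WithTop.coe_eq_coe]
              ring
        _ ≤ lv y + (1 + lv u) := add_le_add (hm ▸ hle) (add_le_add le_rfl hu)
    refine ⟨m, ?_, ?_, ?_, ?_⟩
    · rw [← hA0, hA, lv_add_left (by rw [hm]; exact hstep c hc), hm]
    · rw [← hD0, hD, lv_add_left (by rw [hm]; exact hstep b hb), hm]
    · rw [← hB0, hB, lv_mul, hd, add_zero, ← hm]
      exact hle
    · rw [← hC0, hC]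
      exact hstep a (le_of_eq ha.symm)
  · -- bad case: v(det h) is odd, contradiction
    exfalso
    have hyne : y ≠ 0 := lv_ne_top_iff.mp (fun ht => (ht ▸ hlt).not_ge le_top)
    obtain ⟨n, hn⟩ : ∃ n : ℤ, lv y = (n : WithTop ℤ) := by
      rcases WithTop.ne_top_iff_exists.mp (lv_ne_top_iff.mpr hyne) with ⟨n, hn⟩
      exact ⟨n, hn.symm⟩
    have hxlb : ((n + 1 : ℤ) : WithTop ℤ) ≤ lv x := coe_add_one_le (hn ▸ hlt)
    have hdet2 : h.val.det = -(y * (y * (ε * (a * d))))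
        + (x * x + (x * (y * (ε * (b + c))) + y * (y * (ε * (ε * (c * b)))))) := by
      rw [hdet, hA, hB, hC, hD]; ring
    have hlv1 : lv (-(y * (y * (ε * (a * d))))) = ((2 * n + 1 : ℤ) : WithTop ℤ) := by
      show HahnSeries.orderTop _ = _
      rw [HahnSeries.orderTop_neg]
      show lv _ = _
      rw [lv_mul, lv_mul, lv_mul, lv_mul, hn, hlvε, ha, hd]
      simp only [← WithTop.coe_one, ← WithTop.coe_zero, ← WithTop.coe_add, WithTop.coe_eq_coe]
      ring
    have hrest : ((2 * n + 2 : ℤ) : WithTop ℤ)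
        ≤ lv (x * x + (x * (y * (ε * (b + c))) + y * (y * (ε * (ε * (c * b)))))) := by
      apply lv_add_ge
      · rw [lv_mul]
        calc ((2 * n + 2 : ℤ) : WithTop ℤ)
            = ((n + 1 : ℤ) : WithTop ℤ) + ((n + 1 : ℤ) : WithTop ℤ) := by
              simp only [← WithTop.coe_one, ← WithTop.coe_zero, ← WithTop.coe_add,
                WithTop.coe_eq_coe]
              ring
          _ ≤ lv x + lv x := add_le_add hxlb hxlb
      apply lv_add_ge
      · rw [lv_mul, lv_mul, lv_mul, hlvε]
        calc ((2 * n + 2 : ℤ) : WithTop ℤ)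
            = ((n + 1 : ℤ) : WithTop ℤ) + ((n : WithTop ℤ) + (1 + 0)) := by
              simp only [← WithTop.coe_one, ← WithTop.coe_zero, ← WithTop.coe_add,
                WithTop.coe_eq_coe]
              ring
          _ ≤ lv x + (lv y + (1 + lv (b + c))) := by
              refine add_le_add hxlb (add_le_add (le_of_eq hn.symm)
                (add_le_add le_rfl (lv_add_ge hb hc)))
      · rw [lv_mul, lv_mul, lv_mul, lv_mul, lv_mul, hlvε, hn]
        calc ((2 * n + 2 : ℤ) : WithTop ℤ)
            = ((n : ℤ) : WithTop ℤ) + ((n : WithTop ℤ) + (1 + (1 + (0 + 0)))) := by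
              simp only [← WithTop.coe_one, ← WithTop.coe_zero, ← WithTop.coe_add,
                WithTop.coe_eq_coe]
              ring
          _ ≤ (n : WithTop ℤ) + ((n : WithTop ℤ) + (1 + (1 + (lv c + lv b)))) := by
              refine add_le_add le_rfl (add_le_add le_rfl (add_le_add le_rfl
                (add_le_add le_rfl (add_le_add hc hb))))
    have hlvdet : lv h.val.det = ((2 * n + 1 : ℤ) : WithTop ℤ) := by
      rw [hdet2, lv_add_left]
      · exact hlv1
      · rw [hlv1]
        refine lt_of_lt_of_le ?_ hrest
        exact_mod_cast (by omega : (2 * n + 1 : ℤ) < 2 * n + 2)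
    obtain ⟨m, hm⟩ := heven
    rw [hlvdet] at hm
    have : (2 * n + 1 : ℤ) = 2 * m := by exact_mod_cast hm
    omega
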